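/- Under the assumptions guaranteeing almost sure convergence of X_t = ∑_{i=1}^∞ G_i(λ_i t) S_i with deterministic initial values, the semigroup of X admits the Mehler representation E_{X₀}[F(X_t)] = ∫ F(T_t X₀ + y) μ_t(dy) for all t > 0 and all bounded continuous functions F on C₀([0,1];ℝ^d), where T_t(∑ y_i S_i) = ∑ y_i e^{-λ_i t} S_i and μ_t is the image of the Wiener measure under U_t(∑ y_i S_i) = ∑ y_i (1 - e^{-2λ_i t})^{1/2} S_i. -/

import Mathlib

open MeasureTheory ProbabilityTheory Real

/-- The Schauder function of index `r` (scalar case): `S_1(s) = s`, and for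
`r = 2^m + k`, `1 ≤ k ≤ 2^m`, the tent function of height `2^{-(m+2)/2}` centered at
`(2k-1)/2^{m+1}`, i.e. the primitive of the Haar function `H_r`. -/
noncomputable def schauderScalar (r : ℕ) (s : ℝ) : ℝ :=
  if r = 1 then s
  else
    (2 : ℝ) ^ ((Nat.log 2 (r - 1) : ℝ) / 2) *
      max 0 ((2 : ℝ) ^ (-(Nat.log 2 (r - 1) : ℝ) - 1) -
        |s - (2 * ((r - 2 ^ Nat.log 2 (r - 1) : ℕ) : ℝ) - 1) / 2 ^ (Nat.log 2 (r - 1) + 1)|)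

/-- The `ℝ^d`-valued Schauder functions `S_{d(r-1)+j} = S_r · e_j`. -/
noncomputable def schauder (d i : ℕ) (s : ℝ) : Fin d → ℝ :=
  fun j => if (i - 1) % d = (j : ℕ) then schauderScalar ((i - 1) / d + 1) s else 0

/-- The sup-norm of a path `[0,1] → ℝ^d`. -/
noncomputable def nsup (d : ℕ) (f : ℝ → Fin d → ℝ) : ℝ :=
  ⨆ s ∈ Set.Icc (0 : ℝ) 1, ‖f s‖

/-- The `L¹([0,1];ℝ^d)`-norm of a path. -/
noncomputable def nl1 (d : ℕ) (f : ℝ → Fin d → ℝ) : ℝ :=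
  ∑ j : Fin d, ∫ x in (0 : ℝ)..1, |f x j|

/-- `W` is a standard one-dimensional Brownian motion under `P`: it starts at `0`, has
continuous paths, Gaussian increments `W_t - W_s ∼ N(0, t-s)`, and independent
increments. -/
def IsStdBM {Ω : Type*} [MeasurableSpace Ω] (P : Measure Ω) (W : ℝ → Ω → ℝ) : Prop :=
  (∀ ω, W 0 ω = 0) ∧
  (∀ ω, Continuous fun t => W t ω) ∧
  (∀ s t : ℝ, 0 ≤ s → s ≤ t →
    Measure.map (fun ω => W t ω - W s ω) P = gaussianReal 0 (Real.toNNReal (t - s))) ∧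
  (∀ t : ℕ → ℝ, Monotone t →
    iIndepFun (fun n ω => W (t (n + 1)) ω - W (t n) ω) P)

theorem continuous_schauderScalar (r : ℕ) : Continuous (schauderScalar r) := by
  by_cases h : r = 1
  · simp only [schauderScalar, h, if_true]
    exact continuous_id
  · unfold schauderScalar
    simp only [if_neg h]
    exact continuous_const.mul (continuous_const.max
      (continuous_const.sub ((continuous_id.sub continuous_const).abs)))

/-- The Schauder function `S_i` as an element of `C([0,1], ℝ^d)`. -/
noncomputable def SB (d i : ℕ) : C(Set.Icc (0 : ℝ) 1, Fin d → ℝ) :=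
  ⟨fun s => schauder d i s.val, by
    refine continuous_pi fun j => ?_
    by_cases h : (i - 1) % d = (j : ℕ)
    · simp only [schauder, if_pos h]
      exact (continuous_schauderScalar ((i - 1) / d + 1)).comp
        continuous_subtype_val
    · simp only [schauder, if_neg h]
      exact continuous_const⟩


-- Auxiliary lemmas
lemma schauderScalar_nonneg (r : ℕ) {s : ℝ} (hs : 0 ≤ s) : 0 ≤ schauderScalar r s := by
  unfold schauderScalar
  split
  · exact hs
  · exact mul_nonneg (rpow_nonneg (by norm_num) _) (le_max_left _ _)

lemma schauderScalar_abs_le {r : ℕ} (hr : 2 ≤ r) (s : ℝ) :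
    |schauderScalar r s| ≤ (2:ℝ) ^ (-(Nat.log 2 (r-1) : ℝ)/2) := by
  have hrne : r ≠ 1 := by omega
  unfold schauderScalar
  rw [if_neg hrne]
  set m : ℝ := (Nat.log 2 (r-1) : ℝ) with hm
  have h1 : (0:ℝ) ≤ (2:ℝ) ^ (m/2) := rpow_nonneg (by norm_num) _
  have h2 : (0:ℝ) ≤ (2:ℝ) ^ (-m-1) := rpow_nonneg (by norm_num) _
  rw [abs_mul, abs_of_nonneg h1, abs_of_nonneg (le_max_left _ _)]
  calc (2:ℝ) ^ (m/2) * max 0 ((2:ℝ)^(-m-1) - |_|) ≤ (2:ℝ)^(m/2) * (2:ℝ)^(-m-1) := by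
        refine mul_le_mul_of_nonneg_left (max_le h2 ?_) h1
        exact sub_le_self _ (abs_nonneg _)
    _ = (2:ℝ) ^ (m/2 + (-m-1)) := (rpow_add (by norm_num) _ _).symm
    _ ≤ (2:ℝ) ^ (-m/2) := by
        apply rpow_le_rpow_of_exponent_le (by norm_num)
        linarith
lemma schauderScalar_support {r : ℕ} (hr : 2 ≤ r) {s : ℝ} (h : schauderScalar r s ≠ 0) :
    |s - (2 * ((r - 2 ^ Nat.log 2 (r - 1) : ℕ) : ℝ) - 1) / 2 ^ (Nat.log 2 (r - 1) + 1)|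
      < (2:ℝ) ^ (-(Nat.log 2 (r-1) : ℝ) - 1) := by
  unfold schauderScalar at h
  rw [if_neg (by omega)] at h
  by_contra hc
  push_neg at hc
  exact h (by rw [max_eq_left (by linarith), mul_zero])

lemma rpow_neg_nat (m : ℕ) : (2:ℝ) ^ (-(m:ℝ) - 1) = ((2:ℝ) ^ (m+1))⁻¹ := by
  rw [show -(m:ℝ)-1 = -(((m+1 : ℕ) : ℝ)) by push_cast; ring, rpow_neg (by norm_num),
    rpow_natCast]

lemma schauder_ne_zero_unique {d : ℕ} (hd : 0 < d) {m : ℕ} {i₁ i₂ : ℕ}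
    (h₁ : d*2^m ≤ i₁) (h₁' : i₁ < d*2^(m+1)) (h₂ : d*2^m ≤ i₂) (h₂' : i₂ < d*2^(m+1))
    {x : ℝ} {j : Fin d} (hne₁ : schauder d (i₁+1) x j ≠ 0)
    (hne₂ : schauder d (i₂+1) x j ≠ 0) : i₁ = i₂ := by
  unfold schauder at hne₁ hne₂
  simp only [Nat.add_sub_cancel] at hne₁ hne₂
  by_cases e₁ : i₁ % d = (j : ℕ)
  swap; · simp [e₁] at hne₁
  by_cases e₂ : i₂ % d = (j : ℕ)
  swap; · simp [e₂] at hne₂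
  rw [if_pos e₁] at hne₁
  rw [if_pos e₂] at hne₂
  -- div bounds
  have q₁ : 2^m ≤ i₁/d ∧ i₁/d < 2^(m+1) :=
    ⟨(Nat.le_div_iff_mul_le hd).2 (by linarith [h₁]), (Nat.div_lt_iff_lt_mul hd).2 (by linarith [h₁'])⟩
  have q₂ : 2^m ≤ i₂/d ∧ i₂/d < 2^(m+1) :=
    ⟨(Nat.le_div_iff_mul_le hd).2 (by linarith [h₂]), (Nat.div_lt_iff_lt_mul hd).2 (by linarith [h₂'])⟩
  by_cases hq : i₁ / d = i₂ / d
  · have hm₁ := Nat.div_add_mod i₁ d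
    have hm₂ := Nat.div_add_mod i₂ d
    have h12 : d * (i₁/d) = d * (i₂/d) := by rw [hq]
    omega
  · exfalso
    have hr₁ : 2 ≤ i₁/d + 1 := by have := q₁.1; have : 1 ≤ 2^m := Nat.one_le_two_pow; omega
    have hr₂ : 2 ≤ i₂/d + 1 := by have := q₂.1; have : 1 ≤ 2^m := Nat.one_le_two_pow; omega
    have hlog₁ : Nat.log 2 (i₁/d + 1 - 1) = m := by
      simpa using Nat.log_eq_of_pow_le_of_lt_pow (by simpa using q₁.1) (by simpa using q₁.2)
    have hlog₂ : Nat.log 2 (i₂/d + 1 - 1) = m := by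
      simpa using Nat.log_eq_of_pow_le_of_lt_pow (by simpa using q₂.1) (by simpa using q₂.2)
    have hs₁ := schauderScalar_support hr₁ hne₁
    have hs₂ := schauderScalar_support hr₂ hne₂
    rw [hlog₁] at hs₁
    rw [hlog₂] at hs₂
    set k₁ : ℕ := i₁/d + 1 - 2^m with hk₁
    set k₂ : ℕ := i₂/d + 1 - 2^m with hk₂
    have hkne : k₁ ≠ k₂ := by
      intro hcontr
      apply hq
      have e1 : 2^m ≤ i₁/d := q₁.1
      have e2 : 2^m ≤ i₂/d := q₂.1
      omega
    rw [rpow_neg_nat] at hs₁ hs₂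
    have hD : (0:ℝ) < (2:ℝ)^(m+1) := by positivity
    have hdist : (1:ℝ) ≤ |(k₁:ℝ) - (k₂:ℝ)| := by
      have : (k₁:ℝ) ≠ (k₂:ℝ) := by exact_mod_cast hkne
      have h' : (1:ℤ) ≤ |((k₁:ℤ) - (k₂:ℤ) : ℤ)| := by
        have hz : (k₁:ℤ) - (k₂:ℤ) ≠ 0 := by
          intro hz0; apply hkne
          have : (k₁:ℤ) = (k₂:ℤ) := by omega
          exact_mod_cast this
        exact Int.one_le_abs hz
      calc (1:ℝ) ≤ |((k₁:ℤ) - (k₂:ℤ) : ℤ)| := by exact_mod_cast h'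
        _ = |(k₁:ℝ) - (k₂:ℝ)| := by push_cast; simp
    set c₁ : ℝ := (2 * (k₁:ℝ) - 1) / 2^(m+1)
    set c₂ : ℝ := (2 * (k₂:ℝ) - 1) / 2^(m+1)
    have hcc : (2:ℝ) / 2^(m+1) ≤ |c₁ - c₂| := by
      have hee : c₁ - c₂ = 2*((k₁:ℝ) - k₂) / 2^(m+1) := by
        simp only [c₁, c₂]; field_simp; ring
      calc (2:ℝ)/2^(m+1) ≤ (2*|(k₁:ℝ)-k₂|)/2^(m+1) := by gcongr; linarith
        _ = |c₁ - c₂| := by rw [hee, abs_div, abs_of_pos hD, abs_mul, abs_two]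
    have htri : |c₁ - c₂| ≤ |x - c₁| + |x - c₂| := by
      calc |c₁ - c₂| ≤ |c₁ - x| + |x - c₂| := abs_sub_le _ _ _
        _ = |x - c₁| + |x - c₂| := by rw [abs_sub_comm]
    have : ((2:ℝ)^(m+1))⁻¹ + ((2:ℝ)^(m+1))⁻¹ = 2 / 2^(m+1) := by ring
    linarith

lemma slab_div {d m i : ℕ} (hd : 0 < d) (h : d*2^m ≤ i) (h' : i < d*2^(m+1)) :
    2^m ≤ i/d ∧ i/d < 2^(m+1) :=
  ⟨(Nat.le_div_iff_mul_le hd).2 (by linarith), (Nat.div_lt_iff_lt_mul hd).2 (by linarith)⟩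

lemma schauder_abs_le {d m i : ℕ} (hd : 0 < d) (h : d*2^m ≤ i) (h' : i < d*2^(m+1))
    (x : ℝ) (j : Fin d) : |schauder d (i+1) x j| ≤ (2:ℝ)^(-(m:ℝ)/2) := by
  have hpos : (0:ℝ) ≤ (2:ℝ)^(-(m:ℝ)/2) := rpow_nonneg (by norm_num) _
  unfold schauder
  simp only [Nat.add_sub_cancel]
  split
  · obtain ⟨hq, hq'⟩ := slab_div hd h h'
    have hr : 2 ≤ i/d + 1 := by have : 1 ≤ 2^m := Nat.one_le_two_pow; omega
    have hlog : Nat.log 2 (i/d + 1 - 1) = m := by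
      simpa using Nat.log_eq_of_pow_le_of_lt_pow (by simpa using hq) (by simpa using hq')
    have := schauderScalar_abs_le hr x
    rwa [hlog] at this
  · simpa using hpos

lemma level_sum_bound {d : ℕ} (hd : 0 < d) (m : ℕ) (s : Finset ℕ)
    (hs : ∀ i ∈ s, d*2^m ≤ i ∧ i < d*2^(m+1)) (x : ℝ) (j : Fin d) :
    ∑ i ∈ s, |schauder d (i+1) x j| ≤ (2:ℝ)^(-(m:ℝ)/2) := by
  classical
  have hpos : (0:ℝ) ≤ (2:ℝ)^(-(m:ℝ)/2) := rpow_nonneg (by norm_num) _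
  rw [← Finset.sum_filter_ne_zero]
  set s' := s.filter (fun i => |schauder d (i+1) x j| ≠ 0) with hs'
  have hcard : s'.card ≤ 1 := by
    rw [Finset.card_le_one]
    intro a ha b hb
    simp only [hs', Finset.mem_filter, ne_eq, abs_ne_zero] at ha hb
    exact schauder_ne_zero_unique hd (hs a ha.1).1 (hs a ha.1).2 (hs b hb.1).1 (hs b hb.1).2
      ha.2 hb.2
  calc ∑ i ∈ s', |schauder d (i+1) x j| ≤ s'.card • (2:ℝ)^(-(m:ℝ)/2) := by
        refine Finset.sum_le_card_nsmul _ _ _ fun i hi => ?_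
        have hi' := Finset.mem_filter.1 hi |>.1
        exact schauder_abs_le hd (hs i hi').1 (hs i hi').2 x j
    _ ≤ (2:ℝ)^(-(m:ℝ)/2) := by
        rw [nsmul_eq_mul]
        rcases Nat.le_one_iff_eq_zero_or_eq_one.1 hcard with h | h <;> simp [h, hpos]

lemma sum_SB_apply (d : ℕ) (t : Finset ℕ) (a : ℕ → ℝ) (x : Set.Icc (0:ℝ) 1) (j : Fin d) :
    (∑ i ∈ t, a i • SB d (i+1)) x j = ∑ i ∈ t, a i * schauder d (i+1) (x:ℝ) j := by
  induction t using Finset.induction_on with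
  | empty => simp [SB]
  | insert a s h ih => simp_all [Finset.sum_insert h, SB]

lemma norm_sum_SB_le {d : ℕ} (a : ℕ → ℝ) (t : Finset ℕ) {C : ℝ} (hC : 0 ≤ C)
    (h : ∀ (x : Set.Icc (0:ℝ) 1) (j : Fin d), |∑ i ∈ t, a i * schauder d (i+1) (x:ℝ) j| ≤ C) :
    ‖∑ i ∈ t, a i • SB d (i+1)‖ ≤ C := by
  refine (ContinuousMap.norm_le _ hC).2 fun x => ?_
  refine (pi_norm_le_iff_of_nonneg hC).2 fun j => ?_
  rw [Real.norm_eq_abs, sum_SB_apply]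
  exact h x j

lemma schauder_nonneg (d n : ℕ) {x : ℝ} (hx : 0 ≤ x) (j : Fin d) :
    0 ≤ schauder d n x j := by
  unfold schauder
  split
  · exact schauderScalar_nonneg _ hx
  · exact le_refl 0

lemma summable_u : Summable (fun m : ℕ => ((m:ℝ)+2) * (2:ℝ)^(-(m:ℝ)/2)) := by
  set q : ℝ := (2:ℝ)^(-(1:ℝ)/2) with hqdef
  have hq : ‖q‖ < 1 := by
    rw [Real.norm_eq_abs, abs_of_nonneg (rpow_nonneg (by norm_num) _)]
    exact rpow_lt_one_of_one_lt_of_neg (by norm_num) (by norm_num)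
  have hpow : ∀ m : ℕ, (2:ℝ)^(-(m:ℝ)/2) = q^m := by
    intro m
    rw [hqdef, ← rpow_natCast ((2:ℝ)^(-(1:ℝ)/2)) m, ← rpow_mul (by norm_num)]
    congr 1
    ring
  have h1 : Summable (fun m : ℕ => ((m:ℝ)^1) * q^m + 2 * q^m) :=
    (summable_pow_mul_geometric_of_norm_lt_one 1 hq).add
      ((summable_geometric_of_norm_lt_one hq).mul_left 2)
  refine h1.congr fun m => ?_
  rw [hpow m]
  ring

lemma summable_smul_SB {d : ℕ} (hd : 0 < d) (a : ℕ → ℝ) (M₀ : ℕ)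
    (hb : ∀ m, M₀ ≤ m → ∀ i, d*2^m ≤ i → i < d*2^(m+1) → |a i| ≤ (m:ℝ)+2) :
    Summable (fun i => a i • SB d (i+1)) := by
  classical
  set u : ℕ → ℝ := fun m => ((m:ℝ)+2) * (2:ℝ)^(-(m:ℝ)/2) with hu
  have hu0 : ∀ m, 0 ≤ u m := fun m =>
    mul_nonneg (by positivity) (rpow_nonneg (by norm_num) _)
  have husum : Summable u := summable_u
  rw [summable_iff_vanishing]
  intro e he
  obtain ⟨ε, hε, hball⟩ := Metric.mem_nhds_iff.1 he
  -- choose M ≥ M₀ with tail < ε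
  have htail : Filter.Tendsto (fun M => ∑' k, u (k + M)) Filter.atTop (nhds 0) :=
    tendsto_sum_nat_add u
  have : ∀ᶠ M in Filter.atTop, (∑' k, u (k + M)) < ε ∧ M₀ ≤ M := by
    filter_upwards [htail.eventually (gt_mem_nhds hε), Filter.eventually_ge_atTop M₀]
      with M h1 h2
    exact ⟨h1, h2⟩
  obtain ⟨M, hMtail, hMM₀⟩ := this.exists
  refine ⟨Finset.range (d * 2^M), fun t hdisj => ?_⟩
  apply hball
  rw [Metric.mem_ball, dist_zero_right]
  have hge : ∀ i ∈ t, d * 2^M ≤ i := by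
    intro i hi
    by_contra hlt
    exact (Finset.disjoint_left.1 hdisj hi) (Finset.mem_range.2 (by omega))
  have htsum0 : 0 ≤ ∑' k, u (k + M) := tsum_nonneg (fun k => hu0 _)
  refine lt_of_le_of_lt (norm_sum_SB_le a t htsum0 ?_) hMtail
  intro x j
  set lev : ℕ → ℕ := fun i => Nat.log 2 (i/d) with hlev
  have hlev_mem : ∀ i ∈ t, lev i ∈ Finset.Icc M (t.sup lev) := by
    intro i hi
    rw [Finset.mem_Icc]
    constructor
    · have h1 : 2^M ≤ i/d := (Nat.le_div_iff_mul_le hd).2 (by have := hge i hi; linarith)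
      have : i/d ≠ 0 := by have : 1 ≤ 2^M := Nat.one_le_two_pow; omega
      exact (Nat.le_log_iff_pow_le (by norm_num) this).2 h1
    · exact Finset.le_sup hi
  have hslab : ∀ i ∈ t, d * 2^(lev i) ≤ i ∧ i < d * 2^(lev i + 1) := by
    intro i hi
    have h1 : 2^M ≤ i/d := (Nat.le_div_iff_mul_le hd).2 (by have := hge i hi; linarith)
    have h0 : i/d ≠ 0 := by have : 1 ≤ 2^M := Nat.one_le_two_pow; omega
    have hlow : 2^(lev i) ≤ i/d := Nat.pow_log_le_self 2 h0
    have hhigh : i/d < 2^(lev i + 1) := Nat.lt_pow_succ_log_self (by norm_num) _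
    constructor
    · calc d * 2^(lev i) ≤ d * (i/d) := by
            exact Nat.mul_le_mul_left d hlow
        _ ≤ i := Nat.mul_div_le i d
    · have := (Nat.div_lt_iff_lt_mul hd).1 hhigh
      linarith
  calc |∑ i ∈ t, a i * schauder d (i+1) (x:ℝ) j|
      ≤ ∑ i ∈ t, |a i * schauder d (i+1) (x:ℝ) j| := Finset.abs_sum_le_sum_abs _ _
    _ = ∑ m ∈ Finset.Icc M (t.sup lev), ∑ i ∈ t.filter (fun i => lev i = m),
          |a i * schauder d (i+1) (x:ℝ) j| := (Finset.sum_fiberwise_of_maps_to hlev_mem _).symm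
    _ ≤ ∑ m ∈ Finset.Icc M (t.sup lev), u m := by
        refine Finset.sum_le_sum fun m hm => ?_
        have hmM : M ≤ m := (Finset.mem_Icc.1 hm).1
        calc ∑ i ∈ t.filter (fun i => lev i = m), |a i * schauder d (i+1) (x:ℝ) j|
            ≤ ∑ i ∈ t.filter (fun i => lev i = m), ((m:ℝ)+2) * |schauder d (i+1) (x:ℝ) j| := by
              refine Finset.sum_le_sum fun i hi => ?_
              obtain ⟨hit, hilev⟩ := Finset.mem_filter.1 hi
              have hsl := hslab i hit
              rw [hilev] at hsl
              rw [abs_mul]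
              exact mul_le_mul_of_nonneg_right
                (hb m (le_trans hMM₀ hmM) i hsl.1 hsl.2) (abs_nonneg _)
          _ = ((m:ℝ)+2) * ∑ i ∈ t.filter (fun i => lev i = m), |schauder d (i+1) (x:ℝ) j| := by
              rw [Finset.mul_sum]
          _ ≤ ((m:ℝ)+2) * (2:ℝ)^(-(m:ℝ)/2) := by
              refine mul_le_mul_of_nonneg_left ?_ (by positivity)
              refine level_sum_bound hd m _ (fun i hi => ?_) (x:ℝ) j
              obtain ⟨hit, hilev⟩ := Finset.mem_filter.1 hi
              have hsl := hslab i hit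
              rw [hilev] at hsl
              exact hsl
    _ ≤ ∑' k, u (k + M) := by
        have hinj : ∀ x ∈ Finset.Icc M (t.sup lev), ∀ y ∈ Finset.Icc M (t.sup lev),
            x - M = y - M → x = y := by
          intro x hx y hy hxy
          have := (Finset.mem_Icc.1 hx).1
          have := (Finset.mem_Icc.1 hy).1
          omega
        have heq : ∑ m ∈ Finset.Icc M (t.sup lev), u m
            = ∑ k ∈ (Finset.Icc M (t.sup lev)).image (fun m => m - M), u (k + M) := by
          rw [Finset.sum_image hinj]
          refine Finset.sum_congr rfl fun m hm => ?_
          have := (Finset.mem_Icc.1 hm).1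
          congr 1
          omega
        rw [heq]
        exact Summable.sum_le_tsum _ (fun k _ => hu0 _) ((summable_nat_add_iff M).2 husum)

lemma summable_smul_SB_of_le {d : ℕ} {a b : ℕ → ℝ} (h : ∀ i, |a i| ≤ b i)
    (hb : Summable fun i => b i • SB d (i+1)) :
    Summable (fun i => a i • SB d (i+1)) := by
  rw [summable_iff_vanishing] at hb ⊢
  intro e he
  obtain ⟨ε, hε, hball⟩ := Metric.mem_nhds_iff.1 he
  obtain ⟨s₀, hs₀⟩ := hb (Metric.ball 0 ε) (Metric.ball_mem_nhds 0 hε)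
  refine ⟨s₀, fun t hdisj => ?_⟩
  apply hball
  have hbt := hs₀ t hdisj
  rw [Metric.mem_ball, dist_zero_right] at hbt ⊢
  refine lt_of_le_of_lt (norm_sum_SB_le a t (norm_nonneg _) ?_) hbt
  intro x j
  have hx0 : (0:ℝ) ≤ (x:ℝ) := x.2.1
  calc |∑ i ∈ t, a i * schauder d (i+1) (x:ℝ) j|
      ≤ ∑ i ∈ t, |a i| * schauder d (i+1) (x:ℝ) j := by
        refine le_trans (Finset.abs_sum_le_sum_abs _ _) (Finset.sum_le_sum fun i hi => ?_)
        rw [abs_mul, abs_of_nonneg (schauder_nonneg d (i+1) hx0 j)]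
    _ ≤ ∑ i ∈ t, b i * schauder d (i+1) (x:ℝ) j := by
        refine Finset.sum_le_sum fun i hi => ?_
        exact mul_le_mul_of_nonneg_right (h i) (schauder_nonneg d (i+1) hx0 j)
    _ = (∑ i ∈ t, b i • SB d (i+1)) x j := (sum_SB_apply d t b x j).symm
    _ ≤ ‖(∑ i ∈ t, b i • SB d (i+1)) x‖ :=
        le_trans (le_abs_self _)
          ((Real.norm_eq_abs _) ▸ norm_le_pi_norm ((∑ i ∈ t, b i • SB d (i+1)) x) j)
    _ ≤ ‖∑ i ∈ t, b i • SB d (i+1)‖ := ContinuousMap.norm_coe_le_norm _ x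

section Cmeas
lemma measurableSet_summable (d : ℕ) :
    MeasurableSet {c : ℕ → ℝ | Summable fun i => c i • SB d (i+1)} := by
  classical
  have hset : {c : ℕ → ℝ | Summable fun i => c i • SB d (i+1)} =
      ⋂ (k : ℕ), ⋃ (N : ℕ), ⋂ (t : Finset ℕ) (_ : ∀ i ∈ t, N ≤ i),
        {c : ℕ → ℝ | ‖∑ i ∈ t, c i • SB d (i+1)‖ ≤ 1/((k:ℝ)+1)} := by
    ext c
    simp only [Set.mem_setOf_eq, Set.mem_iInter, Set.mem_iUnion]
    constructor
    · intro hsum k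
      rw [summable_iff_vanishing] at hsum
      obtain ⟨s₀, hs₀⟩ := hsum (Metric.ball 0 (1/((k:ℝ)+1)))
        (Metric.ball_mem_nhds 0 (by positivity))
      refine ⟨(s₀.sup id) + 1, fun t ht => ?_⟩
      have hdisj : Disjoint t s₀ := by
        rw [Finset.disjoint_left]
        intro i hit his₀
        have h1 := ht i hit
        have h2 : i ≤ s₀.sup id := Finset.le_sup (f := id) his₀
        omega
      have := hs₀ t hdisj
      rw [Metric.mem_ball, dist_zero_right] at this
      exact le_of_lt this
    · intro h
      rw [summable_iff_vanishing]
      intro e he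
      obtain ⟨ε, hε, hball⟩ := Metric.mem_nhds_iff.1 he
      obtain ⟨k, hk⟩ := exists_nat_one_div_lt hε
      obtain ⟨N, hN⟩ := h k
      refine ⟨Finset.range N, fun t hdisj => ?_⟩
      apply hball
      rw [Metric.mem_ball, dist_zero_right]
      refine lt_of_le_of_lt (hN t fun i hit => ?_) hk
      by_contra hlt
      exact (Finset.disjoint_left.1 hdisj hit) (Finset.mem_range.2 (by omega))
  rw [hset]
  refine MeasurableSet.iInter fun k => MeasurableSet.iUnion fun N =>
    MeasurableSet.iInter fun t => MeasurableSet.iInter fun _ => ?_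
  have hcont : Continuous fun c : ℕ → ℝ => ‖∑ i ∈ t, c i • SB d (i+1)‖ :=
    (continuous_finset_sum t fun i _ => (continuous_apply i).smul continuous_const).norm
  exact measurableSet_le hcont.measurable measurable_const

lemma measurable_H (d : ℕ) (F : C(Set.Icc (0:ℝ) 1, Fin d → ℝ) → ℝ) (hF : Continuous F) :
    Measurable fun c : ℕ → ℝ => F (∑' i, c i • SB d (i+1)) := by
  classical
  set S := {c : ℕ → ℝ | Summable fun i => c i • SB d (i+1)} with hS
  have hSm := measurableSet_summable d
  set h : ℕ → (ℕ → ℝ) → ℝ := fun n c =>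
    if c ∈ S then F (∑ i ∈ Finset.range n, c i • SB d (i+1)) else F 0 with hh
  have hmeas : ∀ n, Measurable (h n) := by
    intro n
    refine Measurable.ite hSm ?_ measurable_const
    exact (hF.comp (continuous_finset_sum _ fun i _ =>
      (continuous_apply i).smul continuous_const)).measurable
  refine measurable_of_tendsto_metrizable hmeas ?_
  rw [tendsto_pi_nhds]
  intro c
  by_cases hc : c ∈ S
  · have hsum : Summable fun i => c i • SB d (i+1) := hc
    have h1 : Filter.Tendsto (fun n => ∑ i ∈ Finset.range n, c i • SB d (i+1))
        Filter.atTop (nhds (∑' i, c i • SB d (i+1))) := hsum.hasSum.tendsto_sum_nat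
    refine ((hF.tendsto _).comp h1).congr fun n => ?_
    simp only [hh, if_pos hc, Function.comp]
  · have h0 : ∑' i, c i • SB d (i+1) = 0 := tsum_eq_zero_of_not_summable hc
    rw [h0]
    simp only [hh, if_neg hc]
    exact tendsto_const_nhds

lemma aemeasurable_pi' {ι : Type*} [Countable ι] {Ω : Type*} [MeasurableSpace Ω]
    {P : MeasureTheory.Measure Ω} {f : ι → Ω → ℝ}
    (h : ∀ i, AEMeasurable (f i) P) : AEMeasurable (fun ω i => f i ω) P := by
  refine ⟨fun ω i => (h i).mk _ ω, measurable_pi_lambda _ fun i => (h i).measurable_mk, ?_⟩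
  have hae : ∀ᵐ ω ∂P, ∀ i, f i ω = (h i).mk _ ω := MeasureTheory.ae_all_iff.2 fun i => (h i).ae_eq_mk
  filter_upwards [hae] with ω hω
  funext i
  exact hω i

lemma indep_map_pi {ι : Type*} [Fintype ι] {Ω : Type*} [MeasurableSpace Ω]
    {P : MeasureTheory.Measure Ω} [MeasureTheory.IsProbabilityMeasure P] {c : ι → Ω → ℝ}
    (hi : iIndepFun c P) (hm : ∀ i, AEMeasurable (c i) P) :
    MeasureTheory.Measure.map (fun ω i => c i ω) P
      = MeasureTheory.Measure.pi (fun i => MeasureTheory.Measure.map (c i) P) := by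
  haveI : ∀ i, MeasureTheory.IsProbabilityMeasure (MeasureTheory.Measure.map (c i) P) :=
    fun i => MeasureTheory.Measure.isProbabilityMeasure_map (hm i)
  refine (MeasureTheory.Measure.pi_eq fun s hs => ?_).symm
  have hpi : AEMeasurable (fun ω i => c i ω) P := aemeasurable_pi' hm
  rw [MeasureTheory.Measure.map_apply_of_aemeasurable hpi (MeasurableSet.univ_pi hs)]
  have hpre : (fun ω i => c i ω) ⁻¹' (Set.univ.pi s) = ⋂ i, c i ⁻¹' s i := by
    ext ω
    simp [Set.mem_pi]
  rw [hpre, hi.meas_iInter (fun i => ⟨s i, hs i, rfl⟩)]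
  exact Finset.prod_congr rfl fun i _ =>
    (MeasureTheory.Measure.map_apply_of_aemeasurable (hm i) (hs i)).symm

lemma iIndepFun_comp_right {ι ι' : Type*} {f : ι' → ι} (hf : Function.Injective f)
    {Ω : Type*} [MeasurableSpace Ω] {P : MeasureTheory.Measure Ω} {g : ι → Ω → ℝ}
    (h : iIndepFun g P) :
    iIndepFun (fun i => g (f i)) P := by
  classical
  rw [iIndepFun_iff_measure_inter_preimage_eq_mul] at h ⊢
  intro S sets hsets
  set S' : Finset ι := S.map ⟨f, hf⟩ with hS'
  set sets' : ι → Set ℝ := fun j => ⋂ i ∈ S.filter (fun i => f i = j), sets i with hsets'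
  have hfilter : ∀ i ∈ S, S.filter (fun i' => f i' = f i) = {i} := by
    intro i hi
    ext a
    simp only [Finset.mem_filter, Finset.mem_singleton]
    constructor
    · rintro ⟨_, ha⟩
      exact hf ha
    · rintro rfl
      exact ⟨hi, rfl⟩
  have hkey : ∀ i ∈ S, sets' (f i) = sets i := by
    intro i hi
    show (⋂ i' ∈ S.filter (fun i' => f i' = f i), sets i') = sets i
    rw [hfilter i hi]
    simp
  have hmeas' : ∀ j ∈ S', MeasurableSet (sets' j) := by
    intro j hj
    refine MeasurableSet.biInter (Finset.countable_toSet _) fun i hi => ?_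
    exact hsets i (Finset.mem_filter.1 hi).1
  have hInter : (⋂ j ∈ S', g j ⁻¹' sets' j) = ⋂ i ∈ S, g (f i) ⁻¹' sets i := by
    ext ω
    simp only [Set.mem_iInter, hS', Finset.mem_map, Function.Embedding.coeFn_mk]
    constructor
    · intro hω i hi
      have := hω (f i) ⟨i, hi, rfl⟩
      rwa [hkey i hi] at this
    · rintro hω j ⟨i, hi, rfl⟩
      rw [hkey i hi]
      exact hω i hi
  have hprod : ∏ j ∈ S', P (g j ⁻¹' sets' j) = ∏ i ∈ S, P (g (f i) ⁻¹' sets i) := by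
    rw [hS', Finset.prod_map]
    exact Finset.prod_congr rfl fun i hi => by rw [Function.Embedding.coeFn_mk, hkey i hi]
  rw [← hInter, ← hprod]
  exact h S' hmeas'
end Cmeas

open MeasureTheory in
lemma law_eq_of_indep {Ω Ω' : Type*} [MeasurableSpace Ω] [MeasurableSpace Ω']
    {P : Measure Ω} {Q : Measure Ω'} [IsProbabilityMeasure P] [IsProbabilityMeasure Q]
    {u : ℕ → Ω → ℝ} {v : ℕ → Ω' → ℝ}
    (hu : iIndepFun u P)
    (hv : iIndepFun v Q)
    (hum : ∀ i, AEMeasurable (u i) P) (hvm : ∀ i, AEMeasurable (v i) Q)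
    (hlaw : ∀ i, P.map (u i) = Q.map (v i)) :
    P.map (fun ω i => u i ω) = Q.map (fun ω i => v i ω) := by
  have hPm : AEMeasurable (fun ω i => u i ω) P := aemeasurable_pi' hum
  have hQm : AEMeasurable (fun ω i => v i ω) Q := aemeasurable_pi' hvm
  haveI := Measure.isProbabilityMeasure_map hPm
  haveI := Measure.isProbabilityMeasure_map hQm
  refine ext_of_generate_finite (measurableCylinders (fun _ : ℕ => ℝ))
    generateFrom_measurableCylinders.symm isPiSystem_measurableCylinders
    (fun s hs => ?_) (by simp)
  obtain ⟨t, T, hT, rfl⟩ := (mem_measurableCylinders _).1 hs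
  rw [Measure.map_apply_of_aemeasurable hPm hT.cylinder,
    Measure.map_apply_of_aemeasurable hQm hT.cylinder]
  have hP2 : (fun ω i => u i ω) ⁻¹' (cylinder t T) = (fun ω (i : t) => u ↑i ω) ⁻¹' T := rfl
  have hQ2 : (fun ω i => v i ω) ⁻¹' (cylinder t T) = (fun ω (i : t) => v ↑i ω) ⁻¹' T := rfl
  rw [hP2, hQ2,
    ← Measure.map_apply_of_aemeasurable (aemeasurable_pi' fun i : t => hum ↑i) hT,
    ← Measure.map_apply_of_aemeasurable (aemeasurable_pi' fun i : t => hvm ↑i) hT,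
    indep_map_pi (iIndepFun_comp_right Subtype.val_injective hu) (fun i : t => hum ↑i),
    indep_map_pi (iIndepFun_comp_right Subtype.val_injective hv) (fun i : t => hvm ↑i)]
  have heq : (fun i : t => MeasureTheory.Measure.map (u ↑i) P)
      = fun i : t => MeasureTheory.Measure.map (v ↑i) Q := funext fun i => hlaw ↑i
  rw [heq]

lemma gaussianReal_map_neg : (gaussianReal 0 1).map (fun x : ℝ => -x) = gaussianReal 0 1 := by
  have h := gaussianReal_map_const_mul (μ := 0) (v := 1) (-1)
  have heq : (fun x : ℝ => (-1) * x) = (fun x : ℝ => -x) := by funext x; ring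
  rw [heq] at h
  rw [h]
  congr 1
  · norm_num
  · ext
    norm_num

open MeasureTheory in
lemma gaussianReal_tail {a : ℝ} (ha : 2 ≤ a) :
    gaussianReal 0 1 {x : ℝ | a < |x|} ≤ ENNReal.ofReal (2 * rexp (-a)) := by
  have hIoi : gaussianReal 0 1 (Set.Ioi a) ≤ ENNReal.ofReal (rexp (-a)) := by
    rw [gaussianReal_apply_eq_integral 0 one_ne_zero (Set.Ioi a)]
    apply ENNReal.ofReal_le_ofReal
    have hint : IntegrableOn (fun x : ℝ => rexp (-x)) (Set.Ioi a) := by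
      have := exp_neg_integrableOn_Ioi a (b := 1) one_pos
      simpa using this
    calc ∫ x in Set.Ioi a, gaussianPDFReal 0 1 x
        ≤ ∫ x in Set.Ioi a, rexp (-x) := by
          refine setIntegral_mono_on ((integrable_gaussianPDFReal 0 1).integrableOn)
            hint measurableSet_Ioi ?_
          intro x hx
          have hxa : a < x := hx
          unfold gaussianPDFReal
          have h1 : (√(2 * π * (1:NNReal)))⁻¹ ≤ 1 := by
            rw [NNReal.coe_one, mul_one]
            refine inv_le_one_of_one_le₀ ?_
            rw [show (1:ℝ) = √1 by simp]
            exact Real.sqrt_le_sqrt (by nlinarith [pi_gt_three])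
          have h2 : rexp (-(x - 0)^2 / (2 * (1:NNReal))) ≤ rexp (-x) := by
            rw [NNReal.coe_one]
            apply exp_le_exp.2
            nlinarith
          calc (√(2 * π * (1:NNReal)))⁻¹ * rexp (-(x - 0)^2 / (2 * (1:NNReal)))
              ≤ 1 * rexp (-x) := by
                exact mul_le_mul h1 h2 (exp_nonneg _) (by norm_num)
            _ = rexp (-x) := one_mul _
      _ = rexp (-a) := integral_exp_neg_Ioi a
  have hIio : gaussianReal 0 1 (Set.Iio (-a)) = gaussianReal 0 1 (Set.Ioi a) := by
    conv_lhs => rw [← _root_.gaussianReal_map_neg]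
    rw [Measure.map_apply measurable_neg measurableSet_Iio]
    congr 1
    ext x
    simp
  calc gaussianReal 0 1 {x : ℝ | a < |x|}
      ≤ gaussianReal 0 1 (Set.Iio (-a) ∪ Set.Ioi a) := by
        apply measure_mono
        intro x hx
        simp only [Set.mem_setOf_eq] at hx
        rcases le_or_gt 0 x with h | h
        · right
          rwa [abs_of_nonneg h] at hx
        · left
          rw [abs_of_neg h] at hx
          simp only [Set.mem_Iio]
          linarith
    _ ≤ gaussianReal 0 1 (Set.Iio (-a)) + gaussianReal 0 1 (Set.Ioi a) := measure_union_le _ _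
    _ ≤ ENNReal.ofReal (rexp (-a)) + ENNReal.ofReal (rexp (-a)) := by
        rw [hIio]
        exact add_le_add hIoi hIoi
    _ = ENNReal.ofReal (2 * rexp (-a)) := by
        rw [← ENNReal.ofReal_add (exp_nonneg _) (exp_nonneg _)]
        congr 1
        ring

open MeasureTheory in
lemma ae_summable_xi {Ω' : Type*} [MeasurableSpace Ω'] {Q : Measure Ω'} [IsProbabilityMeasure Q]
    {ξ : ℕ → Ω' → ℝ} (hξlaw : ∀ i, Q.map (ξ i) = gaussianReal 0 1)
    {d : ℕ} (hd : 0 < d) (σ : ℕ → ℝ) (hσ : ∀ i, |σ i| ≤ 1) :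
    ∀ᵐ ω' ∂Q, Summable fun i => (σ i * ξ i ω') • SB d (i+1) := by
  classical
  set E : ℕ → Set Ω' := fun m => ⋃ i ∈ Finset.Ico (d*2^m) (d*2^(m+1)),
    {ω' | ((m:ℝ)+2) < |ξ i ω'|} with hE
  have hmeasset : ∀ (a : ℝ), MeasurableSet {x : ℝ | a < |x|} := fun a =>
    measurableSet_lt measurable_const continuous_abs.measurable
  have hξae : ∀ i, AEMeasurable (ξ i) Q := fun i =>
    aemeasurable_of_map_neZero (by rw [hξlaw i]; infer_instance)
  have htail : ∀ (i m : ℕ),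
      Q {ω' | ((m:ℝ)+2) < |ξ i ω'|} ≤ ENNReal.ofReal (2 * rexp (-((m:ℝ)+2))) := by
    intro i m
    have hpre : {ω' | ((m:ℝ)+2) < |ξ i ω'|} = ξ i ⁻¹' {x | ((m:ℝ)+2) < |x|} := rfl
    rw [hpre, ← Measure.map_apply_of_aemeasurable (hξae i) (hmeasset _), hξlaw i]
    exact gaussianReal_tail (by have := Nat.cast_nonneg (α := ℝ) m; linarith)
  have hcard : ∀ m, (Finset.Ico (d*2^m) (d*2^(m+1))).card = d * 2^m := by
    intro m
    rw [Nat.card_Ico]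
    have : d*2^(m+1) = d*2^m + d*2^m := by rw [pow_succ]; ring
    omega
  have hEbound : ∀ m, Q (E m)
      ≤ ENNReal.ofReal ((d:ℝ) * 2^m * (2 * rexp (-((m:ℝ)+2)))) := by
    intro m
    calc Q (E m) ≤ ∑ i ∈ Finset.Ico (d*2^m) (d*2^(m+1)), Q {ω' | ((m:ℝ)+2) < |ξ i ω'|} :=
          measure_biUnion_finset_le _ _
      _ ≤ ∑ _i ∈ Finset.Ico (d*2^m) (d*2^(m+1)), ENNReal.ofReal (2 * rexp (-((m:ℝ)+2))) :=
          Finset.sum_le_sum fun i _ => htail i m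
      _ = (d * 2^m : ℕ) * ENNReal.ofReal (2 * rexp (-((m:ℝ)+2))) := by
          rw [Finset.sum_const, hcard, nsmul_eq_mul]
      _ = ENNReal.ofReal ((d:ℝ) * 2^m * (2 * rexp (-((m:ℝ)+2)))) := by
          rw [← ENNReal.ofReal_natCast (d * 2^m), ← ENNReal.ofReal_mul (by positivity)]
          congr 1
          push_cast
          ring
  have hsummable : Summable (fun m : ℕ => (d:ℝ) * 2^m * (2 * rexp (-((m:ℝ)+2)))) := by
    have hr : ‖2 * rexp (-1)‖ < 1 := by
      rw [Real.norm_eq_abs, abs_of_pos (by positivity), exp_neg]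
      rw [mul_inv_lt_iff₀ (exp_pos 1), one_mul]
      have := exp_one_gt_d9
      linarith
    have hgeom : Summable (fun m : ℕ => (2 * (d:ℝ) * rexp (-2)) * (2 * rexp (-1))^m) :=
      (summable_geometric_of_norm_lt_one hr).mul_left _
    refine hgeom.congr fun m => ?_
    have hexp : rexp (-((m:ℝ)+2)) = (rexp (-1))^m * rexp (-2) := by
      rw [← Real.exp_nat_mul, ← Real.exp_add]
      congr 1
      push_cast
      ring
    rw [hexp, mul_pow]
    ring
  have hsum : ∑' m, Q (E m) ≠ ⊤ := by
    have hle : ∑' m, Q (E m)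
        ≤ ∑' m : ℕ, ENNReal.ofReal ((d:ℝ) * 2^m * (2 * rexp (-((m:ℝ)+2)))) :=
      ENNReal.tsum_le_tsum hEbound
    have heq : ∑' m : ℕ, ENNReal.ofReal ((d:ℝ) * 2^m * (2 * rexp (-((m:ℝ)+2))))
        = ENNReal.ofReal (∑' m : ℕ, (d:ℝ) * 2^m * (2 * rexp (-((m:ℝ)+2)))) :=
      (ENNReal.ofReal_tsum_of_nonneg (fun m => by positivity) hsummable).symm
    rw [heq] at hle
    exact ne_top_of_le_ne_top ENNReal.ofReal_ne_top hle
  have hBC := MeasureTheory.ae_eventually_notMem (μ := Q) hsum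
  filter_upwards [hBC] with ω' hω'
  obtain ⟨M₀, hM₀⟩ := Filter.eventually_atTop.1 hω'
  apply summable_smul_SB hd _ M₀
  intro m hm i hi hi'
  have hnot := hM₀ m hm
  have hbound : |ξ i ω'| ≤ (m:ℝ)+2 := by
    by_contra hgt
    push_neg at hgt
    apply hnot
    rw [hE]
    exact Set.mem_biUnion (Finset.mem_Ico.2 ⟨hi, hi'⟩) hgt
  calc |σ i * ξ i ω'| = |σ i| * |ξ i ω'| := abs_mul _ _
    _ ≤ 1 * ((m:ℝ)+2) := mul_le_mul (hσ i) hbound (abs_nonneg _) one_pos.le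
    _ = (m:ℝ)+2 := one_mul _

/-- Mehler semigroup representation: under the assumptions guaranteeing
a.s. convergence of `X_t = ∑ G_i(λ_i t) S_i` with deterministic initial values,
`E_{X₀}[F(X_t)] = ∫ F(T_t X₀ + y) μ_t(dy)` for all `t > 0` and bounded continuous `F`,
where `T_t X₀ = ∑ G_i(0) e^{-λ_i t} S_i` and `μ_t` is the image of the Wiener measure
under `U_t(∑ y_i S_i) = ∑ y_i (1-e^{-2λ_i t})^{1/2} S_i`; via the Lévy–Ciesielski
representation, the Schauder coefficients `(y_i)` of a Brownian path under the Wiener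
measure are i.i.d. standard normal variables `ξ_i` on an auxiliary space `(Ω', Q)`. -/
theorem mehler_representation {Ω Ω' : Type*} [MeasurableSpace Ω] [MeasurableSpace Ω']
    (P : Measure Ω) (Q : Measure Ω') [IsProbabilityMeasure P] [IsProbabilityMeasure Q]
    (d : ℕ) (hd : 0 < d)
    (lam : ℕ → ℝ) (hpos : ∀ i, 0 < lam i) (hmono : Monotone lam)
    (W : ℕ → ℝ → Ω → ℝ) (hBM : ∀ i, IsStdBM P (W i))
    (hindep : iIndepFun
      (fun i ω t => W i t ω) P)
    (g0 : ℕ → ℝ)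
    (hconv : Summable fun i : ℕ => |g0 (i + 1)| • SB d (i + 1))
    (G : ℕ → ℝ → Ω → ℝ)
    (hG : ∀ i t ω, G i t ω
      = Real.exp (-t) * g0 i + Real.exp (-t) * W i (Real.exp (2 * t) - 1) ω)
    (ξ : ℕ → Ω' → ℝ)
    (hξindep : iIndepFun ξ Q)
    (hξlaw : ∀ i, Measure.map (ξ i) Q = gaussianReal 0 1) :
    ∀ t : ℝ, 0 < t → ∀ F : C(Set.Icc (0 : ℝ) 1, Fin d → ℝ) → ℝ,
      Continuous F → (∃ M : ℝ, ∀ x, |F x| ≤ M) →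
      ∫ ω, F (∑' i : ℕ, G (i + 1) (lam (i + 1) * t) ω • SB d (i + 1)) ∂P
        = ∫ ω', F ((∑' i : ℕ, (g0 (i + 1) * Real.exp (-(lam (i + 1) * t))) • SB d (i + 1)) +
            ∑' i : ℕ, (Real.sqrt (1 - Real.exp (-2 * lam (i + 1) * t)) * ξ i ω') •
              SB d (i + 1)) ∂Q := by
  intro t ht F hF _hbd
  classical
  -- the coefficient processes
  set u : ℕ → Ω → ℝ := fun i ω =>
    Real.exp (-(lam (i+1) * t)) * g0 (i+1) +
      Real.exp (-(lam (i+1) * t)) * W (i+1) (Real.exp (2 * (lam (i+1) * t)) - 1) ω with hu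
  set σ : ℕ → ℝ := fun i => Real.sqrt (1 - Real.exp (-2 * lam (i+1) * t)) with hσdef
  set v : ℕ → Ω' → ℝ := fun i ω' =>
    g0 (i+1) * Real.exp (-(lam (i+1) * t)) + σ i * ξ i ω' with hv
  set H : (ℕ → ℝ) → ℝ := fun c => F (∑' i, c i • SB d (i+1)) with hH
  -- basic positivity facts
  have hτpos : ∀ i : ℕ, 0 < lam i * t := fun i => mul_pos (hpos i) ht
  have hspos : ∀ i : ℕ, 0 ≤ Real.exp (2 * (lam i * t)) - 1 := by
    intro i
    have h1 : (1:ℝ) = Real.exp 0 := (Real.exp_zero).symm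
    have h2 : Real.exp 0 ≤ Real.exp (2 * (lam i * t)) :=
      Real.exp_le_exp.2 (by have := hτpos i; linarith)
    rw [h1]
    linarith
  have hvar : ∀ i : ℕ, 0 ≤ 1 - Real.exp (-2 * lam (i+1) * t) := by
    intro i
    have : Real.exp (-2 * lam (i+1) * t) ≤ Real.exp 0 :=
      Real.exp_le_exp.2 (by have := hτpos (i+1); nlinarith)
    rw [Real.exp_zero] at this
    linarith
  -- W evaluated at fixed times: laws and a.e.-measurability
  have hmapW : ∀ i : ℕ, Measure.map (fun ω => W i (Real.exp (2 * (lam i * t)) - 1) ω) P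
      = gaussianReal 0 (Real.toNNReal (Real.exp (2 * (lam i * t)) - 1)) := by
    intro i
    have h0 := (hBM i).1
    have hm := (hBM i).2.2.1 0 (Real.exp (2 * (lam i * t)) - 1) le_rfl (hspos i)
    have heq : (fun ω => W i (Real.exp (2 * (lam i * t)) - 1) ω - W i 0 ω)
        = fun ω => W i (Real.exp (2 * (lam i * t)) - 1) ω := by
      funext ω
      rw [h0 ω, sub_zero]
    rw [heq] at hm
    rw [hm]
    norm_num
  have hWae : ∀ i : ℕ, AEMeasurable (fun ω => W i (Real.exp (2 * (lam i * t)) - 1) ω) P := by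
    intro i
    refine aemeasurable_of_map_neZero ?_
    rw [hmapW i]
    infer_instance
  have huae : ∀ i, AEMeasurable (u i) P := fun i =>
    ((hWae (i+1)).const_mul _).const_add _
  have hξae : ∀ i, AEMeasurable (ξ i) Q := fun i =>
    aemeasurable_of_map_neZero (by rw [hξlaw i]; infer_instance)
  have hvae : ∀ i, AEMeasurable (v i) Q := fun i =>
    ((hξae i).const_mul _).const_add _
  -- marginal laws
  have hlaw : ∀ i, Measure.map (u i) P = Measure.map (v i) Q := by
    intro i
    set A : ℝ := Real.exp (-(lam (i+1) * t)) * g0 (i+1) with hA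
    set B : ℝ := Real.exp (-(lam (i+1) * t)) with hB
    set s : ℝ := Real.exp (2 * (lam (i+1) * t)) - 1 with hs
    have hPu : Measure.map (u i) P
        = gaussianReal (B * 0 + A) (NNReal.mk (B^2) (sq_nonneg _) * Real.toNNReal s) := by
      have hcomp : u i = (fun x : ℝ => A + B * x) ∘ (fun ω => W (i+1) s ω) := rfl
      rw [hcomp, ← AEMeasurable.map_map_of_aemeasurable
        (show Measurable (fun x : ℝ => A + B * x) by fun_prop).aemeasurable
        (hWae (i+1)), hmapW (i+1)]
      have h2 : (fun x : ℝ => A + B * x) = (fun x : ℝ => x + A) ∘ (fun x : ℝ => B * x) := by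
        funext x
        simp [add_comm]
      rw [h2, ← Measure.map_map (show Measurable (fun x : ℝ => x + A) by fun_prop)
        (show Measurable (fun x : ℝ => B * x) by fun_prop),
        gaussianReal_map_const_mul, gaussianReal_map_add_const]
    have hQv : Measure.map (v i) Q
        = gaussianReal (σ i * 0 + g0 (i+1) * Real.exp (-(lam (i+1) * t)))
            (NNReal.mk ((σ i)^2) (sq_nonneg _) * 1) := by
      set A' : ℝ := g0 (i+1) * Real.exp (-(lam (i+1) * t)) with hA'
      have h1 : v i = (fun x : ℝ => σ i * x + A') ∘ ξ i := by
        funext ω'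
        simp only [hv, Function.comp_apply]
        ring
      rw [h1, ← AEMeasurable.map_map_of_aemeasurable
        (show Measurable (fun x : ℝ => σ i * x + A') by fun_prop).aemeasurable
        (hξae i), hξlaw i]
      have h2 : (fun x : ℝ => σ i * x + A') = (fun x : ℝ => x + A') ∘ (fun x : ℝ => σ i * x) := rfl
      rw [h2, ← Measure.map_map (show Measurable (fun x : ℝ => x + A') by fun_prop)
        (show Measurable (fun x : ℝ => σ i * x) by fun_prop),
        gaussianReal_map_const_mul, gaussianReal_map_add_const]
    rw [hPu, hQv]
    congr 1
    · rw [hA]; ring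
    · ext
      push_cast
      rw [Real.coe_toNNReal _ (by rw [hs]; exact hspos (i+1)), hσdef, Real.sq_sqrt (hvar i)]
      have hexp : B ^ 2 = Real.exp (-2 * lam (i+1) * t) := by
        rw [hB, sq, ← Real.exp_add]
        congr 1
        ring
      rw [hexp, hs]
      have hone : Real.exp (-2 * lam (i+1) * t) * Real.exp (2 * (lam (i+1) * t)) = 1 := by
        rw [← Real.exp_add, show -2 * lam (i+1) * t + 2 * (lam (i+1) * t) = 0 by ring,
          Real.exp_zero]
      nlinarith [hone]
  -- independence
  have huindep : iIndepFun u P := by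
    have base := hindep.comp
      (g := fun j (f : ℝ → ℝ) =>
        Real.exp (-(lam j * t)) * g0 j +
          Real.exp (-(lam j * t)) * f (Real.exp (2 * (lam j * t)) - 1))
      (fun j => ((measurable_pi_apply _).const_mul _).const_add _)
    exact iIndepFun_comp_right Nat.succ_injective base
  have hvindep : iIndepFun v Q :=
    hξindep.comp
      (g := fun i x => g0 (i+1) * Real.exp (-(lam (i+1) * t)) + σ i * x)
      (fun i => ((measurable_id.const_mul _).const_add _))
  -- equality of sequence laws
  have hloweq : Measure.map (fun ω i => u i ω) P = Measure.map (fun ω' i => v i ω') Q :=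
    law_eq_of_indep huindep hvindep huae hvae hlaw
  -- measurability of H
  have hHm : Measurable H := measurable_H d F hF
  have hPm : AEMeasurable (fun ω i => u i ω) P := aemeasurable_pi' huae
  have hQm : AEMeasurable (fun ω' i => v i ω') Q := aemeasurable_pi' hvae
  -- a.e. summability on the Q side
  have hσle : ∀ i, |σ i| ≤ 1 := by
    intro i
    rw [hσdef, abs_of_nonneg (Real.sqrt_nonneg _)]
    refine Real.sqrt_le_one.mpr ?_
    have := Real.exp_pos (-2 * lam (i+1) * t)
    linarith
  have haes : ∀ᵐ ω' ∂Q, Summable fun i => (σ i * ξ i ω') • SB d (i+1) :=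
    ae_summable_xi hξlaw hd σ hσle
  -- summability of the deterministic part
  have hdet : Summable fun i => (g0 (i+1) * Real.exp (-(lam (i+1) * t))) • SB d (i+1) := by
    refine summable_smul_SB_of_le (b := fun i => |g0 (i+1)|) (fun i => ?_) hconv
    rw [abs_mul]
    have h1 : Real.exp (-(lam (i+1) * t)) ≤ 1 := by
      have : Real.exp (-(lam (i+1) * t)) ≤ Real.exp 0 :=
        Real.exp_le_exp.2 (by have := hτpos (i+1); linarith)
      rwa [Real.exp_zero] at this
    have h2 : |Real.exp (-(lam (i+1) * t))| ≤ 1 := by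
      rw [abs_of_pos (Real.exp_pos _)]; exact h1
    calc |g0 (i+1)| * |Real.exp (-(lam (i+1) * t))| ≤ |g0 (i+1)| * 1 :=
          mul_le_mul_of_nonneg_left h2 (abs_nonneg _)
      _ = |g0 (i+1)| := mul_one _
  -- main chain
  simp only [hG]
  calc ∫ ω, F (∑' i, (Real.exp (-(lam (i+1) * t)) * g0 (i+1) +
          Real.exp (-(lam (i+1) * t)) *
            W (i+1) (Real.exp (2 * (lam (i+1) * t)) - 1) ω) • SB d (i+1)) ∂P
      = ∫ ω, H (fun i => u i ω) ∂P := rfl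
    _ = ∫ c, H c ∂(Measure.map (fun ω i => u i ω) P) :=
        (integral_map hPm hHm.stronglyMeasurable.aestronglyMeasurable).symm
    _ = ∫ c, H c ∂(Measure.map (fun ω' i => v i ω') Q) := by rw [hloweq]
    _ = ∫ ω', H (fun i => v i ω') ∂Q :=
        integral_map hQm hHm.stronglyMeasurable.aestronglyMeasurable
    _ = ∫ ω', F ((∑' i : ℕ, (g0 (i + 1) * Real.exp (-(lam (i + 1) * t))) • SB d (i + 1)) +
          ∑' i : ℕ, (Real.sqrt (1 - Real.exp (-2 * lam (i + 1) * t)) * ξ i ω') •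
            SB d (i + 1)) ∂Q := by
        refine integral_congr_ae ?_
        filter_upwards [haes] with ω' hsum
        have hsplit : ∀ i : ℕ, v i ω' • SB d (i+1)
            = (g0 (i+1) * Real.exp (-(lam (i+1) * t))) • SB d (i+1)
              + (σ i * ξ i ω') • SB d (i+1) := by
          intro i
          rw [← add_smul]
        rw [hH]
        simp only []
        rw [tsum_congr hsplit, Summable.tsum_add hdet hsum]
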